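/- The map f_α is not chaotic in the sense of Li and Yorke: it has no Li–Yorke scrambled pair, i.e., there is no pair x ≠ y in [0,1] with liminf_n |f_α^n(x) − f_α^n(y)| = 0 and limsup_n |f_α^n(x) − f_α^n(y)| > 0. -/

import Mathlib

noncomputable def fDel (α : ℝ) (x : ℝ) : ℝ :=
  if x = 1 then 0
  else
    let j := sInf {n : ℕ | x < 1 - α ^ n}
    if x ≤ 1 - α ^ (j - 1) + α ^ j then x - 1 + 2 * α ^ (j - 1) - α ^ j
    else (1 - α + α ^ 2) / (2 * α - 1) * (x - 1) + α ^ (j + 1) * (2 - α) / (2 * α - 1)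

namespace St8

noncomputable def hm (α x : ℝ) : ℝ := 1 - α + α * x
noncomputable def sl (α : ℝ) : ℝ := (1 - α + α ^ 2) / (2 * α - 1)
noncomputable def cc (α : ℝ) : ℝ := α ^ 2 * (2 - α) / (2 * α - 1)

variable {α x y : ℝ}

lemma setne (hα1 : 0 < α) (hα2 : α < 1 / 2) (hx : x < 1) :
    {n : ℕ | x < 1 - α ^ n}.Nonempty := by
  obtain ⟨n, hn⟩ := exists_pow_lt_of_lt_one (by linarith : (0:ℝ) < 1 - x) (by linarith : α < 1)
  exact ⟨n, by simp only [Set.mem_setOf_eq]; linarith⟩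

lemma sinf_one (hα1 : 0 < α) (hα2 : α < 1 / 2) (hx0 : 0 ≤ x) (hx1 : x < 1 - α) :
    sInf {n : ℕ | x < 1 - α ^ n} = 1 := by
  have h1 : 1 ∈ {n : ℕ | x < 1 - α ^ n} := by simp [hx1]
  refine le_antisymm (Nat.sInf_le h1) ?_
  have hne : {n : ℕ | x < 1 - α ^ n}.Nonempty := ⟨1, h1⟩
  have hmem := Nat.sInf_mem hne
  rcases Nat.eq_zero_or_pos (sInf {n : ℕ | x < 1 - α ^ n}) with h | h
  · rw [h] at hmem; simp only [Set.mem_setOf_eq, pow_zero] at hmem; linarith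
  · exact h

lemma fDel_low (hα1 : 0 < α) (hα2 : α < 1 / 2) (hx0 : 0 ≤ x) (hx1 : x ≤ α) :
    fDel α x = x + 1 - α := by
  have hx1' : x < 1 - α := by linarith
  have hne : x ≠ 1 := by intro h; rw [h] at hx1'; linarith
  rw [fDel, if_neg hne]
  simp only [sinf_one hα1 hα2 hx0 hx1', Nat.sub_self, pow_zero, pow_one]
  rw [if_pos] <;> first | ring1 | linarith

lemma fDel_mid (hα1 : 0 < α) (hα2 : α < 1 / 2) (hx1 : α < x) (hx2 : x < 1 - α) :
    fDel α x = sl α * (x - 1) + cc α := by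
  have hne : x ≠ 1 := by intro h; rw [h] at hx2; linarith
  rw [fDel, if_neg hne]
  simp only [sinf_one hα1 hα2 (by linarith : (0:ℝ) ≤ x) hx2, Nat.sub_self, pow_zero, pow_one]
  rw [if_neg] <;> first | (simp only [sl, cc]; try ring1) | (push_neg; linarith)

lemma sinf_shift (hα1 : 0 < α) (hα2 : α < 1 / 2) (hx0 : 0 ≤ x) (hx1 : x < 1) :
    sInf {n : ℕ | hm α x < 1 - α ^ n} = sInf {n : ℕ | x < 1 - α ^ n} + 1 := by
  have hne : {n : ℕ | x < 1 - α ^ n}.Nonempty := setne hα1 hα2 hx1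
  have hjm : x < 1 - α ^ sInf {n : ℕ | x < 1 - α ^ n} := Nat.sInf_mem hne
  have hmem : (sInf {n : ℕ | x < 1 - α ^ n} + 1) ∈ {n : ℕ | hm α x < 1 - α ^ n} := by
    simp only [Set.mem_setOf_eq, hm, pow_succ]
    nlinarith
  refine le_antisymm (Nat.sInf_le hmem) (le_csInf ⟨_, hmem⟩ ?_)
  rintro (_ | m) hb <;> simp only [Set.mem_setOf_eq, pow_zero, pow_succ, hm] at hb
  · nlinarith
  · have hxm : x < 1 - α ^ m := by nlinarith
    have := Nat.sInf_le (show m ∈ {n : ℕ | x < 1 - α ^ n} from hxm)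
    omega

lemma fDel_hmap (hα1 : 0 < α) (hα2 : α < 1 / 2) (hx : x ∈ Set.Icc (0:ℝ) 1) :
    fDel α (hm α x) = α * fDel α x := by
  obtain ⟨hx0, hx1⟩ := hx
  rcases eq_or_lt_of_le hx1 with rfl | hx1
  · have h1 : hm α 1 = 1 := by rw [hm]; ring
    rw [h1, fDel, if_pos rfl, mul_zero]
  · have hne : x ≠ 1 := ne_of_lt hx1
    have hhx1 : hm α x < 1 := by rw [hm]; nlinarith
    have hhne : hm α x ≠ 1 := ne_of_lt hhx1
    have hj1 : 1 ≤ sInf {n : ℕ | x < 1 - α ^ n} := by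
      have hne' : {n : ℕ | x < 1 - α ^ n}.Nonempty := setne hα1 hα2 hx1
      have hjm := Nat.sInf_mem hne'
      rcases Nat.eq_zero_or_pos (sInf {n : ℕ | x < 1 - α ^ n}) with h | h
      · rw [h] at hjm; simp only [Set.mem_setOf_eq, pow_zero] at hjm; linarith
      · exact h
    obtain ⟨m, hmj⟩ : ∃ m, sInf {n : ℕ | x < 1 - α ^ n} = m + 1 :=
      ⟨_, (Nat.succ_pred_eq_of_pos hj1).symm⟩
    rw [fDel, if_neg hhne, fDel, if_neg hne]
    simp only [sinf_shift hα1 hα2 hx0 hx1, hmj, Nat.add_sub_cancel]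
    have hcond : (hm α x ≤ 1 - α ^ (m + 1) + α ^ (m + 1 + 1)) ↔ (x ≤ 1 - α ^ m + α ^ (m + 1)) := by
      rw [← mul_le_mul_iff_right₀ hα1 (b := x), hm]
      simp only [pow_succ]
      constructor <;> intro h <;> nlinarith
    by_cases hc : x ≤ 1 - α ^ m + α ^ (m + 1)
    · rw [if_pos (hcond.mpr hc), if_pos hc, hm]
      simp only [pow_succ]; ring
    · rw [if_neg (fun h => hc (hcond.mp h)), if_neg hc, hm]
      simp only [pow_succ]; ring
lemma mid_mem (hα1 : 0 < α) (hα2 : α < 1 / 2) (hx1 : α ≤ x) (hx2 : x ≤ 1 - α) :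
    sl α * (x - 1) + cc α ∈ Set.Icc (0:ℝ) 1 := by
  have hd : 2 * α - 1 < 0 := by linarith
  have hkey : sl α * (x - 1) + cc α
      = ((1 - α + α ^ 2) * (x - 1) + α ^ 2 * (2 - α)) / (2 * α - 1) := by
    rw [sl, cc]; field_simp
  rw [hkey]
  constructor
  · rw [le_div_iff_of_neg hd]
    nlinarith [mul_nonneg (mul_nonneg hα1.le (by linarith : (0:ℝ) ≤ 1 - α))
        (by linarith : (0:ℝ) ≤ 1 - 2 * α),
      mul_le_mul_of_nonneg_left (show x - 1 ≤ -α by linarith)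
        (show (0:ℝ) ≤ 1 - α + α ^ 2 by nlinarith [sq_nonneg α])]
  · rw [div_le_iff_of_neg hd]
    nlinarith [mul_le_mul_of_nonneg_left (show α - 1 ≤ x - 1 by linarith)
        (show (0:ℝ) ≤ 1 - α + α ^ 2 by nlinarith [sq_nonneg α])]

lemma fDel_mem_aux (hα1 : 0 < α) (hα2 : α < 1 / 2) :
    ∀ j : ℕ, ∀ x : ℝ, 0 ≤ x → x ≤ 1 - α ^ j → fDel α x ∈ Set.Icc (0:ℝ) 1 := by
  intro j
  induction j with
  | zero =>
    intro x hx0 hx1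
    simp only [pow_zero, sub_self] at hx1
    have hx : x = 0 := le_antisymm hx1 hx0
    subst hx
    rw [fDel_low hα1 hα2 le_rfl (le_of_lt hα1)]
    constructor <;> linarith
  | succ j ih =>
    intro x hx0 hx1
    by_cases h1 : x ≤ α
    · rw [fDel_low hα1 hα2 hx0 h1]
      constructor <;> linarith
    · push_neg at h1
      by_cases h2 : x < 1 - α
      · rw [fDel_mid hα1 hα2 h1 h2]
        exact mid_mem hα1 hα2 (le_of_lt h1) (le_of_lt h2)
      · push_neg at h2
        set u := (x - (1 - α)) / α with hu
        have hu0 : 0 ≤ u := div_nonneg (by linarith) (le_of_lt hα1)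
        have hu1 : u ≤ 1 - α ^ j := by
          rw [hu, div_le_iff₀ hα1]
          have : α ^ (j + 1) = α ^ j * α := pow_succ α j
          nlinarith
        have hmu : hm α u = x := by
          rw [hm, hu]; field_simp; ring
        have hfu := ih u hu0 hu1
        have : fDel α x = α * fDel α u := by
          rw [← hmu, fDel_hmap hα1 hα2 ⟨hu0, by nlinarith [pow_nonneg (le_of_lt hα1) j]⟩]
        rw [this]
        obtain ⟨ha, hb⟩ := hfu
        constructor
        · positivity
        · nlinarith

lemma fDel_mem (hα1 : 0 < α) (hα2 : α < 1 / 2) (hx : x ∈ Set.Icc (0:ℝ) 1) :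
    fDel α x ∈ Set.Icc (0:ℝ) 1 := by
  obtain ⟨hx0, hx1⟩ := hx
  rcases eq_or_lt_of_le hx1 with rfl | hx1
  · rw [fDel, if_pos rfl]; constructor <;> norm_num
  · obtain ⟨n, hn⟩ := exists_pow_lt_of_lt_one (by linarith : (0:ℝ) < 1 - x) (by linarith : α < 1)
    exact fDel_mem_aux hα1 hα2 n x hx0 (by linarith)

lemma iter_mem (hα1 : 0 < α) (hα2 : α < 1 / 2) (hx : x ∈ Set.Icc (0:ℝ) 1) :
    ∀ n, (fDel α)^[n] x ∈ Set.Icc (0:ℝ) 1 := by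
  intro n
  induction n with
  | zero => simpa using hx
  | succ n ih => rw [Function.iterate_succ_apply']; exact fDel_mem hα1 hα2 ih

lemma fDel_alpha (hα1 : 0 < α) (hα2 : α < 1 / 2) {u : ℝ} (hu : u ∈ Set.Icc (0:ℝ) 1) :
    fDel α (α * u) = hm α u := by
  rw [fDel_low hα1 hα2 (mul_nonneg (le_of_lt hα1) hu.1) (by nlinarith [hu.1, hu.2]), hm]
  ring

lemma iter_hmap (hα1 : 0 < α) (hα2 : α < 1 / 2) (hx : x ∈ Set.Icc (0:ℝ) 1) :
    ∀ m, (fDel α)^[2 * m] (hm α x) = hm α ((fDel α)^[m] x) := by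
  intro m
  induction m with
  | zero => simp
  | succ m ih =>
    have h1 : 2 * (m + 1) = (2 * m) + 1 + 1 := by omega
    rw [h1, Function.iterate_succ_apply', Function.iterate_succ_apply', ih,
      fDel_hmap hα1 hα2 (iter_mem hα1 hα2 hx m),
      fDel_alpha hα1 hα2 (fDel_mem hα1 hα2 (iter_mem hα1 hα2 hx m)),
      Function.iterate_succ_apply']

lemma next_I1 (hα1 : 0 < α) (hα2 : α < 1 / 2) {z : ℝ} (hz : z ∈ Set.Icc (0:ℝ) α) :
    fDel α z ∈ Set.Icc (1 - α) 1 := by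
  rw [fDel_low hα1 hα2 hz.1 hz.2]
  obtain ⟨h1, h2⟩ := hz
  constructor <;> linarith

lemma next_I0 (hα1 : 0 < α) (hα2 : α < 1 / 2) {z : ℝ} (hz : z ∈ Set.Icc (1 - α) 1) :
    fDel α z ∈ Set.Icc (0:ℝ) α := by
  obtain ⟨h1, h2⟩ := hz
  set u := (z - (1 - α)) / α with hu
  have hu0 : 0 ≤ u := div_nonneg (by linarith) (le_of_lt hα1)
  have hu1 : u ≤ 1 := by rw [hu, div_le_iff₀ hα1]; linarith
  have hmu : hm α u = z := by rw [hm, hu]; field_simp; ring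
  have : fDel α z = α * fDel α u := by rw [← hmu, fDel_hmap hα1 hα2 ⟨hu0, hu1⟩]
  rw [this]
  obtain ⟨ha, hb⟩ := fDel_mem hα1 hα2 ⟨hu0, hu1⟩
  constructor
  · positivity
  · nlinarith
lemma trap (hα1 : 0 < α) (hα2 : α < 1 / 2) {x : ℝ}
    (hM : ∀ n, (fDel α)^[n] x ∈ Set.Ioo α (1 - α)) : ∀ n, (fDel α)^[n] x = x := by
  have hnum : 0 < 1 - α + α ^ 2 := by nlinarith [sq_nonneg α]
  have hden : 2 * α - 1 < 0 := by linarith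
  have hs_neg : sl α < 0 := div_neg_of_pos_of_neg hnum hden
  have hs1 : 1 < -sl α := by
    have h1 : -sl α = (1 - α + α ^ 2) / (1 - 2 * α) := by
      rw [sl, show (1:ℝ) - 2*α = -(2*α - 1) by ring, div_neg]
    rw [h1]
    rw [lt_div_iff₀ (by linarith : (0:ℝ) < 1 - 2*α)]
    nlinarith [sq_nonneg α]
  set p := (sl α - cc α) / (sl α - 1) with hp
  have hsne : sl α - 1 ≠ 0 := ne_of_lt (by linarith)
  have hpfix : sl α * (p - 1) + cc α = p := by
    have hmul : p * (sl α - 1) = sl α - cc α := by rw [hp]; exact div_mul_cancel₀ _ hsne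
    linear_combination hmul
  clear hp
  clear_value p
  have hiter : ∀ n, (fDel α)^[n] x - p = (sl α) ^ n * (x - p) := by
    intro n
    induction n with
    | zero => simp
    | succ n ih =>
      rw [Function.iterate_succ_apply', fDel_mid hα1 hα2 (hM n).1 (hM n).2]
      have h2 : sl α * ((fDel α)^[n] x - 1) + cc α - p = sl α * ((fDel α)^[n] x - p) := by
        linear_combination hpfix
      rw [show sl α * ((fDel α)^[n] x - 1) + cc α - p
            = sl α * ((fDel α)^[n] x - p) from h2, ih, pow_succ]
      ring
  have hxp : x = p := by
    by_contra hne
    have hd0 : 0 < |x - p| := abs_pos.mpr (sub_ne_zero.mpr hne)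
    obtain ⟨n, hn⟩ := pow_unbounded_of_one_lt ((1 + |p|) / |x - p|) hs1
    have hb : |(fDel α)^[n] x - p| ≤ 1 + |p| := by
      have h1 := (hM n).1
      have h2 := (hM n).2
      have h3 : |(fDel α)^[n] x| ≤ 1 := abs_le.mpr ⟨by linarith, by linarith⟩
      calc |(fDel α)^[n] x - p| ≤ |(fDel α)^[n] x| + |p| := abs_sub _ _
        _ ≤ 1 + |p| := by linarith
    have heq : |(fDel α)^[n] x - p| = (-sl α) ^ n * |x - p| := by
      rw [hiter n, abs_mul, abs_pow, abs_of_neg hs_neg]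
    rw [div_lt_iff₀ hd0] at hn
    rw [heq] at hb
    linarith
  have hfix : fDel α x = x := by
    have hx0 := hM 0
    simp only [Function.iterate_zero_apply] at hx0
    rw [fDel_mid hα1 hα2 hx0.1 hx0.2, hxp, hpfix]
  intro n
  induction n with
  | zero => rfl
  | succ n ih => rw [Function.iterate_succ_apply', ih, hfix]

lemma C1_stay (hα1 : 0 < α) (hα2 : α < 1 / 2) {y : ℝ} (hy : y ∈ Set.Icc (0:ℝ) 1) {Ny : ℕ}
    (h0 : (fDel α)^[Ny] y ∉ Set.Ioo α (1 - α)) :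
    ∀ m, (fDel α)^[Ny + m] y ∈ Set.Icc (0:ℝ) α ∪ Set.Icc (1 - α) 1 := by
  intro m
  induction m with
  | zero =>
    have hz := iter_mem hα1 hα2 hy Ny
    rw [Nat.add_zero]
    simp only [Set.mem_Ioo, not_and, not_lt] at h0
    by_cases hle : (fDel α)^[Ny] y ≤ α
    · exact Or.inl ⟨hz.1, hle⟩
    · exact Or.inr ⟨h0 (not_le.mp hle), hz.2⟩
  | succ m ih =>
    rw [show Ny + (m + 1) = (Ny + m) + 1 from rfl, Function.iterate_succ_apply']
    rcases ih with h | h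
    · exact Or.inr (next_I1 hα1 hα2 h)
    · exact Or.inl (next_I0 hα1 hα2 h)

lemma mismatch (hα1 : 0 < α) (hα2 : α < 1 / 2) {x y : ℝ} {N : ℕ}
    (hX : (fDel α)^[N] x ∈ Set.Icc (0:ℝ) α) (hY : (fDel α)^[N] y ∈ Set.Icc (1 - α) 1)
    (hfreq : ∀ ε > 0, ∀ M : ℕ, ∃ n ≥ M, |(fDel α)^[n] x - (fDel α)^[n] y| < ε) : False := by
  have key : ∀ m, ((fDel α)^[N + m] x ∈ Set.Icc (0:ℝ) α ∧ (fDel α)^[N + m] y ∈ Set.Icc (1 - α) 1)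
      ∨ ((fDel α)^[N + m] x ∈ Set.Icc (1 - α) 1 ∧ (fDel α)^[N + m] y ∈ Set.Icc (0:ℝ) α) := by
    intro m
    induction m with
    | zero => exact Or.inl ⟨by simpa using hX, by simpa using hY⟩
    | succ m ih =>
      rw [show N + (m + 1) = (N + m) + 1 from rfl, Function.iterate_succ_apply',
        Function.iterate_succ_apply']
      rcases ih with ⟨h1, h2⟩ | ⟨h1, h2⟩
      · exact Or.inr ⟨next_I1 hα1 hα2 h1, next_I0 hα1 hα2 h2⟩
      · exact Or.inl ⟨next_I0 hα1 hα2 h1, next_I1 hα1 hα2 h2⟩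
  obtain ⟨n, hn, hlt⟩ := hfreq (1 - 2 * α) (by linarith) N
  obtain ⟨m, rfl⟩ : ∃ m, n = N + m := ⟨n - N, by omega⟩
  rcases key m with ⟨h1, h2⟩ | ⟨h1, h2⟩
  · have hge : 1 - 2 * α ≤ -((fDel α)^[N + m] x - (fDel α)^[N + m] y) := by
      have := h1.2; have := h2.1; linarith
    have := neg_le_abs ((fDel α)^[N + m] x - (fDel α)^[N + m] y)
    linarith
  · have hge : 1 - 2 * α ≤ (fDel α)^[N + m] x - (fDel α)^[N + m] y := by
      have := h1.1; have := h2.2; linarith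
    have := le_abs_self ((fDel α)^[N + m] x - (fDel α)^[N + m] y)
    linarith

lemma trap_mixed (hα1 : 0 < α) (hα2 : α < 1 / 2) {x y : ℝ} (hy : y ∈ Set.Icc (0:ℝ) 1)
    (hMx : ∀ n, (fDel α)^[n] x ∈ Set.Ioo α (1 - α))
    (hMy : ¬ ∀ n, (fDel α)^[n] y ∈ Set.Ioo α (1 - α))
    (hfreq : ∀ ε > 0, ∀ M : ℕ, ∃ n ≥ M, |(fDel α)^[n] x - (fDel α)^[n] y| < ε) : False := by
  push_neg at hMy
  obtain ⟨Ny, hNy⟩ := hMy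
  have hC := C1_stay hα1 hα2 hy hNy
  have hfx := trap hα1 hα2 hMx
  have hx0 := hMx 0
  simp only [Function.iterate_zero_apply] at hx0
  have hρ : 0 < min (x - α) (1 - α - x) := lt_min (by linarith [hx0.1]) (by linarith [hx0.2])
  obtain ⟨n, hn, hlt⟩ := hfreq _ hρ Ny
  obtain ⟨m, rfl⟩ : ∃ m, n = Ny + m := ⟨n - Ny, by omega⟩
  rw [hfx] at hlt
  rcases hC m with h | h
  · have h1 : min (x - α) (1 - α - x) ≤ x - (fDel α)^[Ny + m] y := by
      have := min_le_left (x - α) (1 - α - x); have := h.2; linarith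
    have := le_abs_self (x - (fDel α)^[Ny + m] y)
    linarith
  · have h1 : min (x - α) (1 - α - x) ≤ -(x - (fDel α)^[Ny + m] y) := by
      have := min_le_right (x - α) (1 - α - x); have := h.1; linarith
    have := neg_le_abs (x - (fDel α)^[Ny + m] y)
    linarith
lemma main (hα1 : 0 < α) (hα2 : α < 1 / 2) :
    ∀ (k : ℕ) (x y : ℝ), x ∈ Set.Icc (0:ℝ) 1 → y ∈ Set.Icc (0:ℝ) 1 →
    (∀ ε > 0, ∀ M : ℕ, ∃ n ≥ M, |(fDel α)^[n] x - (fDel α)^[n] y| < ε) →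
    ∃ N, ∀ n ≥ N, |(fDel α)^[n] x - (fDel α)^[n] y| ≤ α ^ k := by
  intro k
  induction k with
  | zero =>
    intro x y hx hy _
    refine ⟨0, fun n _ => ?_⟩
    have hx' := iter_mem hα1 hα2 hx n
    have hy' := iter_mem hα1 hα2 hy n
    rw [pow_zero]
    exact abs_le.mpr ⟨by linarith [hx'.1, hy'.2], by linarith [hx'.2, hy'.1]⟩
  | succ k ih =>
    intro x y hx hy hfreq
    rcases eq_or_ne x y with rfl | hxy
    · exact ⟨0, fun n _ => by rw [sub_self, abs_zero]; positivity⟩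
    by_cases hMx : ∀ n, (fDel α)^[n] x ∈ Set.Ioo α (1 - α)
    · by_cases hMy : ∀ n, (fDel α)^[n] y ∈ Set.Ioo α (1 - α)
      · exfalso
        have hfx := trap hα1 hα2 hMx
        have hfy := trap hα1 hα2 hMy
        obtain ⟨n, -, hlt⟩ := hfreq |x - y| (abs_pos.mpr (sub_ne_zero.mpr hxy)) 0
        rw [hfx n, hfy n] at hlt
        exact lt_irrefl _ hlt
      · exact (trap_mixed hα1 hα2 hy hMx hMy hfreq).elim
    · by_cases hMy : ∀ n, (fDel α)^[n] y ∈ Set.Ioo α (1 - α)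
      · exfalso
        refine trap_mixed hα1 hα2 hx hMy hMx ?_
        intro ε hε M
        obtain ⟨n, hn, hlt⟩ := hfreq ε hε M
        exact ⟨n, hn, by rwa [abs_sub_comm]⟩
      · push_neg at hMx hMy
        obtain ⟨Nx, hNx⟩ := hMx
        obtain ⟨Ny, hNy⟩ := hMy
        have hdes : ∀ N : ℕ, (fDel α)^[N] x ∈ Set.Icc (1 - α) 1 →
            (fDel α)^[N] y ∈ Set.Icc (1 - α) 1 →
            ∃ N', ∀ n ≥ N', |(fDel α)^[n] x - (fDel α)^[n] y| ≤ α ^ (k + 1) := by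
          intro N hX hY
          set u := ((fDel α)^[N] x - (1 - α)) / α with hudef
          set v := ((fDel α)^[N] y - (1 - α)) / α with hvdef
          have hu' : u ∈ Set.Icc (0:ℝ) 1 := ⟨div_nonneg (by linarith [hX.1]) hα1.le,
            by rw [hudef, div_le_iff₀ hα1]; linarith [hX.2]⟩
          have hv' : v ∈ Set.Icc (0:ℝ) 1 := ⟨div_nonneg (by linarith [hY.1]) hα1.le,
            by rw [hvdef, div_le_iff₀ hα1]; linarith [hY.2]⟩
          have hmu : hm α u = (fDel α)^[N] x := by rw [hm, hudef]; field_simp; ring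
          have hmv : hm α v = (fDel α)^[N] y := by rw [hm, hvdef]; field_simp; ring
          have hEx : ∀ m, (fDel α)^[N + 2*m] x = hm α ((fDel α)^[m] u) := by
            intro m
            rw [show N + 2*m = 2*m + N by omega, Function.iterate_add_apply, ← hmu,
              iter_hmap hα1 hα2 hu' m]
          have hEy : ∀ m, (fDel α)^[N + 2*m] y = hm α ((fDel α)^[m] v) := by
            intro m
            rw [show N + 2*m = 2*m + N by omega, Function.iterate_add_apply, ← hmv,
              iter_hmap hα1 hα2 hv' m]
          have hdE : ∀ m, |(fDel α)^[N + 2*m] x - (fDel α)^[N + 2*m] y|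
              = α * |(fDel α)^[m] u - (fDel α)^[m] v| := by
            intro m
            rw [hEx m, hEy m,
              show hm α ((fDel α)^[m] u) - hm α ((fDel α)^[m] v)
                = α * ((fDel α)^[m] u - (fDel α)^[m] v) by rw [hm, hm]; ring,
              abs_mul, abs_of_pos hα1]
          have hOx : ∀ m, (fDel α)^[N + 2*m + 1] x = α * ((fDel α)^[m+1] u) := by
            intro m
            rw [show N + 2*m + 1 = (N + 2*m) + 1 from rfl, Function.iterate_succ_apply', hEx m,
              fDel_hmap hα1 hα2 (iter_mem hα1 hα2 hu' m)]
            rw [Function.iterate_succ_apply']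
          have hOy : ∀ m, (fDel α)^[N + 2*m + 1] y = α * ((fDel α)^[m+1] v) := by
            intro m
            rw [show N + 2*m + 1 = (N + 2*m) + 1 from rfl, Function.iterate_succ_apply', hEy m,
              fDel_hmap hα1 hα2 (iter_mem hα1 hα2 hv' m)]
            rw [Function.iterate_succ_apply']
          have hdO : ∀ m, |(fDel α)^[N + 2*m + 1] x - (fDel α)^[N + 2*m + 1] y|
              = α * |(fDel α)^[m+1] u - (fDel α)^[m+1] v| := by
            intro m
            rw [hOx m, hOy m, show α * ((fDel α)^[m+1] u) - α * ((fDel α)^[m+1] v)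
                = α * ((fDel α)^[m+1] u - (fDel α)^[m+1] v) by ring, abs_mul, abs_of_pos hα1]
          have hfuv : ∀ ε > 0, ∀ M : ℕ, ∃ m ≥ M, |(fDel α)^[m] u - (fDel α)^[m] v| < ε := by
            intro ε hε M
            obtain ⟨n, hn, hlt⟩ := hfreq (α * ε) (by positivity) (N + 2*M)
            obtain ⟨r, rfl⟩ : ∃ r, n = N + r := ⟨n - N, by omega⟩
            have hr : 2*M ≤ r := by omega
            rcases Nat.even_or_odd r with ⟨m, hm2⟩ | ⟨m, hm2⟩
            · refine ⟨m, by omega, ?_⟩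
              rw [show N + r = N + 2*m by omega, hdE m] at hlt
              exact (mul_lt_mul_iff_right₀ hα1).mp hlt
            · refine ⟨m + 1, by omega, ?_⟩
              rw [show N + r = N + 2*m + 1 by omega, hdO m] at hlt
              exact (mul_lt_mul_iff_right₀ hα1).mp hlt
          obtain ⟨M, hMle⟩ := ih u v hu' hv' hfuv
          refine ⟨N + 2*M, fun n hn => ?_⟩
          obtain ⟨r, rfl⟩ : ∃ r, n = N + r := ⟨n - N, by omega⟩
          have hr : 2*M ≤ r := by omega
          rcases Nat.even_or_odd r with ⟨m, hm2⟩ | ⟨m, hm2⟩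
          · rw [show N + r = N + 2*m by omega, hdE m, pow_succ']
            exact mul_le_mul_of_nonneg_left (hMle m (by omega)) hα1.le
          · rw [show N + r = N + 2*m + 1 by omega, hdO m, pow_succ']
            exact mul_le_mul_of_nonneg_left (hMle (m+1) (by omega)) hα1.le
        have hCx := C1_stay hα1 hα2 hx hNx
        have hCy := C1_stay hα1 hα2 hy hNy
        have hCx0 : (fDel α)^[max Nx Ny] x ∈ Set.Icc (0:ℝ) α ∪ Set.Icc (1-α) 1 := by
          obtain ⟨m, hme⟩ : ∃ m, max Nx Ny = Nx + m := ⟨max Nx Ny - Nx, by omega⟩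
          rw [hme]; exact hCx m
        have hCy0 : (fDel α)^[max Nx Ny] y ∈ Set.Icc (0:ℝ) α ∪ Set.Icc (1-α) 1 := by
          obtain ⟨m, hme⟩ : ∃ m, max Nx Ny = Ny + m := ⟨max Nx Ny - Ny, by omega⟩
          rw [hme]; exact hCy m
        rcases hCx0 with hX | hX <;> rcases hCy0 with hY | hY
        · exact hdes (max Nx Ny + 1)
            (by rw [Function.iterate_succ_apply']; exact next_I1 hα1 hα2 hX)
            (by rw [Function.iterate_succ_apply']; exact next_I1 hα1 hα2 hY)
        · exact (mismatch hα1 hα2 hX hY hfreq).elim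
        · exfalso
          refine mismatch hα1 hα2 hY hX ?_
          intro ε hε M
          obtain ⟨n, hn, hlt⟩ := hfreq ε hε M
          exact ⟨n, hn, by rwa [abs_sub_comm]⟩
        · exact hdes (max Nx Ny) hX hY

end St8

/-- `f_α` is not Li–Yorke chaotic: there is no pair `x ≠ y` in `[0,1]` with
`liminf_n |f^n x - f^n y| = 0` and `limsup_n |f^n x - f^n y| > 0`. -/
theorem stmt8 (α : ℝ) (hα1 : 0 < α) (hα2 : α < 1 / 2) :
    ¬ ∃ x ∈ Set.Icc (0 : ℝ) 1, ∃ y ∈ Set.Icc (0 : ℝ) 1, x ≠ y ∧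
      Filter.liminf (fun n : ℕ => |(fDel α)^[n] x - (fDel α)^[n] y|) Filter.atTop = 0 ∧
      0 < Filter.limsup (fun n : ℕ => |(fDel α)^[n] x - (fDel α)^[n] y|) Filter.atTop := by
  rintro ⟨x, hx, y, hy, hxy, hinf, hsup⟩
  have hd1 : ∀ n, |(fDel α)^[n] x - (fDel α)^[n] y| ≤ 1 := fun n => by
    have hx' := St8.iter_mem hα1 hα2 hx n
    have hy' := St8.iter_mem hα1 hα2 hy n
    exact abs_le.mpr ⟨by linarith [hx'.1, hy'.2], by linarith [hx'.2, hy'.1]⟩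
  have hcb : Filter.IsCoboundedUnder (· ≥ ·) Filter.atTop
      (fun n : ℕ => |(fDel α)^[n] x - (fDel α)^[n] y|) :=
    Filter.isCoboundedUnder_ge_of_le _ hd1
  have hfreq : ∀ ε > 0, ∀ M : ℕ, ∃ n ≥ M, |(fDel α)^[n] x - (fDel α)^[n] y| < ε := by
    intro ε hε M
    have hlt : Filter.liminf (fun n : ℕ => |(fDel α)^[n] x - (fDel α)^[n] y|) Filter.atTop < ε := by
      rw [hinf]; exact hε
    have hfr := Filter.frequently_lt_of_liminf_lt hcb hlt
    exact Filter.frequently_atTop.mp hfr M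
  have hk : ∀ k : ℕ, Filter.limsup (fun n : ℕ => |(fDel α)^[n] x - (fDel α)^[n] y|)
      Filter.atTop ≤ α ^ k := by
    intro k
    obtain ⟨N, hN⟩ := St8.main hα1 hα2 k x y hx hy hfreq
    have hcb2 : Filter.IsCoboundedUnder (· ≤ ·) Filter.atTop
        (fun n : ℕ => |(fDel α)^[n] x - (fDel α)^[n] y|) :=
      Filter.isCoboundedUnder_le_of_le _ (fun n => abs_nonneg _)
    exact Filter.limsup_le_of_le hcb2 (Filter.eventually_atTop.mpr ⟨N, hN⟩)
  obtain ⟨k, hk'⟩ := exists_pow_lt_of_lt_one hsup (by linarith : α < 1)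
  exact absurd (hk k) (not_le.mpr hk')
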